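/- For every n and k with k ∣ n, there exists a set S of n polygonal curves in ℝ^1, each with exactly k vertices, and a family of (n/k)^k query curves, each with k vertices, such that any two distinct query curves have different sets of nearest neighbors in S under the discrete Fréchet distance. Consequently the Voronoi diagram of S under the discrete Fréchet distance has at least (n/k)^k regions. -/

import Mathlib

open Real

noncomputable section

abbrev Pt (d : ℕ) := EuclideanSpace ℝ (Fin d)

/-- One step of a coupling: advance the first and/or the second index by exactly 1. -/
def CouplingStep (a b : ℕ × ℕ) : Prop :=
  (b.1 = a.1 + 1 ∧ b.2 = a.2) ∨ (b.1 = a.1 ∧ b.2 = a.2 + 1) ∨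
    (b.1 = a.1 + 1 ∧ b.2 = a.2 + 1)

/-- A coupling between a curve with `k` vertices and one with `l` vertices
(0-based indices): starts at `(0,0)`, ends at `(k-1, l-1)`, monotone unit steps. -/
def IsCoupling (k l : ℕ) (c : List (ℕ × ℕ)) : Prop :=
  c.head? = some (0, 0) ∧ c.getLast? = some (k - 1, l - 1) ∧
    c.Chain' CouplingStep ∧ ∀ ij ∈ c, ij.1 < k ∧ ij.2 < l

/-- The maximum distance over the coupled pairs of a coupling. -/
def couplingCost {d : ℕ} (P Q : List (Pt d)) (c : List (ℕ × ℕ)) : ℝ :=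
  c.foldr (fun ij acc => max (dist (P.getD ij.1 0) (Q.getD ij.2 0)) acc) 0

/-- The discrete Fréchet distance between two polygonal curves, given as lists
of their vertices. -/
def dDF {d : ℕ} (P Q : List (Pt d)) : ℝ :=
  sInf { m : ℝ | ∃ c, IsCoupling P.length Q.length c ∧ m = couplingCost P Q c }

/-- The set of nearest neighbors of a query curve `Q` in a finite set `S` of
curves, under the discrete Fréchet distance. -/
def NN {d : ℕ} (S : Finset (List (Pt d))) (Q : List (Pt d)) : Set (List (Pt d)) :=
  { P | P ∈ S ∧ ∀ P' ∈ S, dDF Q P ≤ dDF Q P' }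

/-- The point of `ℝ²` with given coordinates. -/
def e2 (x y : ℝ) : Pt 2 := (WithLp.equiv 2 (Fin 2 → ℝ)).symm ![x, y]

/-- The point of `ℝ¹` with given coordinate. -/
def e1 (x : ℝ) : Pt 1 := (WithLp.equiv 2 (Fin 1 → ℝ)).symm ![x]

-- ===== basic lemmas =====

lemma dist_e1 (a b : ℝ) : dist (e1 a) (e1 b) = |a - b| := by
  rw [EuclideanSpace.dist_eq]
  rw [Fin.sum_univ_one]
  show √(dist (e1 a 0) (e1 b 0) ^ 2) = _
  have ha : e1 a 0 = a := by simp [e1, WithLp.equiv_symm_apply, PiLp.toLp_apply]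
  have hb : e1 b 0 = b := by simp [e1, WithLp.equiv_symm_apply, PiLp.toLp_apply]
  rw [ha, hb, Real.dist_eq, ← Real.sqrt_sq_eq_abs]
  rw [Real.sq_sqrt (sq_nonneg _), Real.sqrt_sq_eq_abs]

lemma e1_inj {a b : ℝ} (h : e1 a = e1 b) : a = b := by
  have := congrArg (fun p : Pt 1 => p 0) h
  simpa [e1, WithLp.equiv_symm_apply, PiLp.toLp_apply] using this

lemma couplingCost_nonneg {d : ℕ} (P Q : List (Pt d)) (c : List (ℕ × ℕ)) :
    0 ≤ couplingCost P Q c := by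
  induction c with
  | nil => simp [couplingCost]
  | cons x t ih =>
      simp only [couplingCost, List.foldr_cons] at *
      exact le_trans ih (le_max_right _ _)

lemma le_couplingCost {d : ℕ} (P Q : List (Pt d)) {c : List (ℕ × ℕ)} {ij : ℕ × ℕ}
    (h : ij ∈ c) : dist (P.getD ij.1 0) (Q.getD ij.2 0) ≤ couplingCost P Q c := by
  induction c with
  | nil => simp at h
  | cons x t ih =>
      simp only [couplingCost, List.foldr_cons]
      rcases List.mem_cons.1 h with rfl | h'
      · exact le_max_left _ _
      · exact le_trans (ih h') (le_max_right _ _)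

lemma couplingCost_le {d : ℕ} (P Q : List (Pt d)) {c : List (ℕ × ℕ)} {B : ℝ}
    (hB : 0 ≤ B) (h : ∀ ij ∈ c, dist (P.getD ij.1 0) (Q.getD ij.2 0) ≤ B) :
    couplingCost P Q c ≤ B := by
  induction c with
  | nil => simpa [couplingCost] using hB
  | cons x t ih =>
      simp only [couplingCost, List.foldr_cons] at *
      exact max_le (h x (List.mem_cons_self)) (ih fun ij hij => h ij (List.mem_cons_of_mem _ hij))

/-- identity coupling -/
def idC (k : ℕ) : List (ℕ × ℕ) := (List.range k).map fun i => (i, i)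

lemma idC_isCoupling {k : ℕ} (hk : 0 < k) : IsCoupling k k (idC k) := by
  obtain ⟨k, rfl⟩ := Nat.exists_eq_succ_of_ne_zero hk.ne'
  refine ⟨?_, ?_, ?_, ?_⟩
  · rw [idC, List.head?_map, List.range_succ_eq_map]
    rfl
  · rw [idC, List.getLast?_map, List.range_succ, List.getLast?_concat]
    rfl
  · show List.IsChain _ (idC _); rw [idC, List.isChain_map]
    rw [List.isChain_range_succ]
    intro i _
    exact Or.inr (Or.inr ⟨rfl, rfl⟩)
  · intro ij hij
    rw [idC, List.mem_map] at hij
    obtain ⟨i, hi, rfl⟩ := hij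
    exact ⟨List.mem_range.1 hi, List.mem_range.1 hi⟩

lemma mem_fst_of_coupling :
    ∀ (c : List (ℕ × ℕ)), c.Chain' CouplingStep → ∀ x : ℕ × ℕ, c.head? = some x →
      ∀ y : ℕ × ℕ, c.getLast? = some y → ∀ i, x.1 ≤ i → i ≤ y.1 → ∃ p ∈ c, p.1 = i := by
  intro c
  induction c with
  | nil => intro _ x hx; simp at hx
  | cons a t ih =>
      intro hch x hx y hy i hxi hiy
      have hax : a = x := by simpa using hx
      subst hax
      rcases eq_or_lt_of_le hxi with rfl | hlt
      · exact ⟨a, List.mem_cons_self, rfl⟩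
      · match t, hch, hy with
        | [], _, hy =>
            have : a = y := by simpa using hy
            subst this; omega
        | b :: t', hch, hy =>
            have hstep : CouplingStep a b := (List.isChain_cons_cons.1 hch).1
            have hch' : (b :: t').Chain' CouplingStep := (List.isChain_cons_cons.1 hch).2
            have hy' : (b :: t').getLast? = some y := by
              rw [← hy, List.getLast?_cons_cons]
            have hb : b.1 ≤ i := by
              rcases hstep with ⟨h1, _⟩ | ⟨h1, _⟩ | ⟨h1, _⟩ <;> omega
            obtain ⟨p, hp, hpi⟩ := ih hch' b rfl y hy' i hb hiy
            exact ⟨p, List.mem_cons_of_mem _ hp, hpi⟩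



-- ===== banded curves =====

def curveOf {k : ℕ} (X : Fin k → ℝ) : List (Pt 1) :=
  List.ofFn fun i => e1 (10000 * i + X i)

lemma curveOf_length {k : ℕ} (X : Fin k → ℝ) : (curveOf X).length = k :=
  List.length_ofFn

lemma curveOf_getD {k : ℕ} (X : Fin k → ℝ) (i : ℕ) (hi : i < k) :
    (curveOf X).getD i 0 = e1 (10000 * (⟨i, hi⟩ : Fin k) + X ⟨i, hi⟩) := by
  rw [curveOf, List.getD_eq_getElem _ _ (by simpa using hi), List.getElem_ofFn]

lemma curveOf_inj {k : ℕ} {X Y : Fin k → ℝ} (h : curveOf X = curveOf Y) : X = Y := by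
  funext i
  have := congrFun (List.ofFn_inj.1 h) i
  have := e1_inj this
  linarith

/-- lower bound on dDF for banded curves -/
lemma dDF_ge {k : ℕ} (hk : 0 < k) {X Y : Fin k → ℝ}
    (hX : ∀ i, |X i| ≤ 60) (hY : ∀ i, |Y i| ≤ 60) {v : ℝ} (hv : v ≤ 120)
    (i : Fin k) (hvi : v ≤ |X i - Y i|) :
    v ≤ dDF (curveOf X) (curveOf Y) := by
  apply le_csInf
  · exact ⟨couplingCost (curveOf X) (curveOf Y) (idC k), idC k, by
      simpa [curveOf_length] using idC_isCoupling hk, rfl⟩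
  · rintro b ⟨c, hc, rfl⟩
    rw [curveOf_length, curveOf_length] at hc
    obtain ⟨hhead, hlast, hchain, hbnd⟩ := hc
    obtain ⟨p, hp, hpi⟩ := mem_fst_of_coupling c hchain _ hhead _ hlast i.val
      (by simp) (by have := i.isLt; simp; omega)
    have hj : p.2 < k := (hbnd p hp).2
    have hle := le_couplingCost (curveOf X) (curveOf Y) hp
    rw [hpi] at hle
    rw [curveOf_getD X i.val i.isLt, curveOf_getD Y p.2 hj, dist_e1, Fin.eta] at hle
    refine le_trans ?_ hle
    simp only [Fin.val_mk] at *
    rcases eq_or_ne p.2 i.val with hij | hij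
    · have hfin : (⟨p.2, hj⟩ : Fin k) = i := Fin.ext hij
      rw [hfin, hij]
      have heq : 10000 * ((i.val : ℕ):ℝ) + X i - (10000 * ((i.val : ℕ):ℝ) + Y i)
          = X i - Y i := by ring
      rw [heq]; exact hvi
    · have hne : ((i.val:ℤ) - (p.2:ℤ)) ≠ 0 := by
        intro h; apply hij; omega
      have h1 : (1:ℝ) ≤ |(i.val:ℝ) - (p.2:ℝ)| := by
        have : (1:ℤ) ≤ |(i.val:ℤ) - (p.2:ℤ)| := Int.one_le_abs hne
        calc (1:ℝ) ≤ ((|(i.val:ℤ) - (p.2:ℤ)| : ℤ) : ℝ) := by exact_mod_cast this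
          _ = |(i.val:ℝ) - (p.2:ℝ)| := by push_cast; rfl
      have hXY : |X i - Y ⟨p.2, hj⟩| ≤ 120 := by
        have h1' := abs_le.1 (hX i); have h2' := abs_le.1 (hY ⟨p.2, hj⟩)
        rw [abs_le]; constructor <;> linarith [h1'.1, h1'.2, h2'.1, h2'.2]
      have hsplit : 10000 * ((i.val:ℕ):ℝ) + X i - (10000 * ((p.2:ℕ):ℝ) + Y ⟨p.2, hj⟩)
          = 10000 * ((i.val:ℝ) - (p.2:ℝ)) + (X i - Y ⟨p.2, hj⟩) := by push_cast; ring
      rw [hsplit]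
      have hA : (10000:ℝ) ≤ |10000 * ((i.val:ℝ) - (p.2:ℝ))| := by
        rw [abs_mul]
        calc (10000:ℝ) = 10000 * 1 := by ring
          _ ≤ |(10000:ℝ)| * |(i.val:ℝ) - (p.2:ℝ)| := by
              rw [abs_of_nonneg (by norm_num : (0:ℝ) ≤ 10000)]
              exact mul_le_mul_of_nonneg_left h1 (by norm_num)
      have htri : |10000 * ((i.val:ℝ) - (p.2:ℝ))|
          ≤ |10000 * ((i.val:ℝ) - (p.2:ℝ)) + (X i - Y ⟨p.2, hj⟩)| + |X i - Y ⟨p.2, hj⟩| := by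
        calc |10000 * ((i.val:ℝ) - (p.2:ℝ))|
            = |10000 * ((i.val:ℝ) - (p.2:ℝ)) + (X i - Y ⟨p.2, hj⟩) - (X i - Y ⟨p.2, hj⟩)| := by
              ring_nf
          _ ≤ _ := abs_sub _ _
      linarith

/-- upper bound on dDF via the identity coupling -/
lemma dDF_le {k : ℕ} (hk : 0 < k) {X Y : Fin k → ℝ} {v : ℝ} (hv : 0 ≤ v)
    (h : ∀ i, |X i - Y i| ≤ v) :
    dDF (curveOf X) (curveOf Y) ≤ v := by
  have hmem : couplingCost (curveOf X) (curveOf Y) (idC k) ∈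
      { m : ℝ | ∃ c, IsCoupling (curveOf X).length (curveOf Y).length c
        ∧ m = couplingCost (curveOf X) (curveOf Y) c } :=
    ⟨idC k, by simpa [curveOf_length] using idC_isCoupling hk, rfl⟩
  refine le_trans (csInf_le ⟨0, ?_⟩ hmem) ?_
  · rintro b ⟨c, hc, rfl⟩
    exact couplingCost_nonneg _ _ _
  · apply couplingCost_le _ _ hv
    intro ij hij
    rw [idC, List.mem_map] at hij
    obtain ⟨i, hi, rfl⟩ := hij
    have hik : i < k := List.mem_range.1 hi
    rw [curveOf_getD X i hik, curveOf_getD Y i hik, dist_e1]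
    calc |10000 * ((⟨i, hik⟩:Fin k):ℝ) + X ⟨i, hik⟩ - (10000 * ((⟨i, hik⟩:Fin k):ℝ) + Y ⟨i, hik⟩)|
        = |X ⟨i, hik⟩ - Y ⟨i, hik⟩| := by ring_nf
      _ ≤ v := h _


-- ===== dDF of singleton curves (k = 1 case) =====

lemma dDF_single (x y : Pt 1) : dDF [x] [y] = dist x y := by
  have hcoup : IsCoupling 1 1 [(0,0)] := by
    refine ⟨rfl, rfl, ?_, ?_⟩
    · exact List.isChain_singleton _
    · intro ij hij; simp at hij; simp [hij]
  have hcost : couplingCost [x] [y] [(0,0)] = dist x y := by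
    simp [couplingCost, max_eq_left dist_nonneg]
  apply le_antisymm
  · refine le_trans (csInf_le ⟨0, ?_⟩ ⟨[(0,0)], by simpa using hcoup, rfl⟩) ?_
    · rintro b ⟨c, hc, rfl⟩; exact couplingCost_nonneg _ _ _
    · rw [hcost]
  · apply le_csInf
    · exact ⟨couplingCost [x] [y] [(0,0)], [(0,0)], by simpa using hcoup, rfl⟩
    · rintro b ⟨c, hc, rfl⟩
      have hhead := hc.1
      have hmem : (0,0) ∈ c := by
        cases c with
        | nil => simp at hhead
        | cons a t =>
            have : a = (0,0) := by simpa using hhead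
            subst this; exact List.mem_cons_self
      have := le_couplingCost [x] [y] hmem
      simpa using this

-- ===== the construction, for k = K + 2 =====

section Main

variable (m K : ℕ)

def Ee : ℝ := ((32:ℝ) * ((m:ℝ)+1)^2)⁻¹

lemma Ee_pos : 0 < Ee m := by
  have : (0:ℝ) < 32 * ((m:ℝ)+1)^2 := by positivity
  exact inv_pos.2 this

lemma Ee_combo {x : ℝ} (hx : |x| ≤ 8*((m:ℝ)+1)^2) : |Ee m * x| ≤ 1/4 := by
  have h32 : (0:ℝ) < 32 * ((m:ℝ)+1)^2 := by positivity
  rw [abs_mul, abs_of_pos (Ee_pos m), Ee]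
  rw [inv_mul_le_iff₀ h32]
  nlinarith [hx]

def lastI' (K : ℕ) : Fin (K+2) := Fin.last (K+1)

def qoff (f : Fin (K+2) → Fin m) (i : Fin (K+2)) : ℝ :=
  if i.val < K+1 then -1 + Ee m * ((f i : ℕ) + (m:ℝ) * ((f (lastI' K) : ℕ) : ℝ))
  else 1 + Ee m * ((m:ℝ) * ((f (lastI' K) : ℕ) : ℝ))

def soff (s : Fin (K+2) × Fin m) (i : Fin (K+2)) : ℝ :=
  if s.1.val < K+1 then (if i = s.1 then -2 + Ee m * ((s.2 : ℕ) + 1/2) else 0)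
  else (if i.val = 0 then (if (s.2 : ℕ) = 0 then 50 else 2 * Ee m * (m:ℝ) * ((s.2:ℕ):ℝ)) else 0)

def Memb (s : Fin (K+2) × Fin m) (f : Fin (K+2) → Fin m) : Prop :=
  if s.1.val < K+1 then (f s.1 : ℕ) ≤ (s.2 : ℕ)
  else (0 < (s.2 : ℕ) ∧ (s.2 : ℕ) ≤ (f (lastI' K) : ℕ))

def level (f : Fin (K+2) → Fin m) : ℝ := 1 + Ee m * ((m:ℝ) * ((f (lastI' K) : ℕ):ℝ))

end Main

section MainProofs

variable {m K : ℕ} (hm : 0 < m)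

-- basic numeric facts
lemma fval_le (hm : 0 < m) {f : Fin (K+2) → Fin m} (i : Fin (K+2)) :
    ((f i : ℕ) : ℝ) ≤ (m:ℝ) - 1 := by
  have h : (f i : ℕ) ≤ m - 1 := by have := (f i).isLt; omega
  have h2 : ((f i : ℕ) : ℝ) ≤ ((m - 1 : ℕ) : ℝ) := by exact_mod_cast h
  rwa [Nat.cast_sub hm, Nat.cast_one] at h2

end MainProofs

section MainProofs2

variable {m K : ℕ}

lemma finval_le (hm : 0 < m) (t : Fin m) : ((t : ℕ) : ℝ) ≤ (m:ℝ) - 1 := by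
  have h : (t : ℕ) ≤ m - 1 := by have := t.isLt; omega
  have h2 : ((t : ℕ) : ℝ) ≤ ((m - 1 : ℕ) : ℝ) := by exact_mod_cast h
  rwa [Nat.cast_sub hm, Nat.cast_one] at h2

lemma finval_nonneg (t : Fin m) : (0:ℝ) ≤ ((t : ℕ) : ℝ) := Nat.cast_nonneg _

lemma m_big : ((m:ℝ) - 1) ≤ ((m:ℝ)+1)^2 - 1 := by nlinarith [Nat.cast_nonneg (α := ℝ) m]

/-- product bound helper -/
lemma Ee_le {x : ℝ} (h0 : 0 ≤ x) (hx : x ≤ 8*((m:ℝ)+1)^2) : Ee m * x ≤ 1/4 := by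
  have := Ee_combo (m := m) (x := x) (by rwa [abs_of_nonneg h0])
  rwa [abs_of_nonneg (mul_nonneg (le_of_lt (Ee_pos m)) h0)] at this

lemma Ee_nonneg_mul {x : ℝ} (h0 : 0 ≤ x) : 0 ≤ Ee m * x :=
  mul_nonneg (le_of_lt (Ee_pos m)) h0

def zeroI (K : ℕ) : Fin (K+2) := ⟨0, by omega⟩

lemma lastI_val : (lastI' K).val = K+1 := rfl

lemma level_ge_one (f : Fin (K+2) → Fin m) : 1 ≤ level m K f := by
  have := Ee_nonneg_mul (m := m)
    (x := (m:ℝ) * ((f (lastI' K) : ℕ):ℝ)) (by positivity)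
  unfold level; linarith

lemma level_le (hm : 0 < m) (f : Fin (K+2) → Fin m) : level m K f ≤ 5/4 := by
  have hb : (m:ℝ) * ((f (lastI' K) : ℕ):ℝ) ≤ 8*((m:ℝ)+1)^2 := by
    have h1 := finval_le hm (f (lastI' K))
    have h2 : (0:ℝ) ≤ (m:ℝ) := Nat.cast_nonneg m
    nlinarith
  have := Ee_le (m := m) (by positivity) hb
  unfold level; linarith

lemma qoff_band (hm : 0 < m) (f : Fin (K+2) → Fin m) (i : Fin (K+2)) :
    |qoff m K f i| ≤ 60 := by
  have h1 := finval_le hm (f i)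
  have h1' := finval_nonneg (f i)
  have h2 := finval_le hm (f (lastI' K))
  have h2' := finval_nonneg (f (lastI' K))
  have hm0 : (0:ℝ) ≤ (m:ℝ) := Nat.cast_nonneg m
  have hcb : ((f i : ℕ):ℝ) + (m:ℝ) * ((f (lastI' K) : ℕ):ℝ) ≤ 8*((m:ℝ)+1)^2 := by nlinarith
  have hcb0 : (0:ℝ) ≤ ((f i : ℕ):ℝ) + (m:ℝ) * ((f (lastI' K) : ℕ):ℝ) := by positivity
  have hE1 := Ee_le (m := m) hcb0 hcb
  have hE0 := Ee_nonneg_mul (m := m) hcb0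
  have hcb2 : (m:ℝ) * ((f (lastI' K) : ℕ):ℝ) ≤ 8*((m:ℝ)+1)^2 := by nlinarith
  have hE2 := Ee_le (m := m) (by positivity) hcb2
  have hE2' := Ee_nonneg_mul (m := m) (x := (m:ℝ) * ((f (lastI' K) : ℕ):ℝ)) (by positivity)
  unfold qoff
  split_ifs <;> rw [abs_le] <;> constructor <;> linarith

lemma soff_band (hm : 0 < m) (s : Fin (K+2) × Fin m) (i : Fin (K+2)) :
    |soff m K s i| ≤ 60 := by
  have h1 := finval_le hm s.2
  have h1' := finval_nonneg s.2
  have hm0 : (0:ℝ) ≤ (m:ℝ) := Nat.cast_nonneg m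
  have hcb : ((s.2 : ℕ):ℝ) + 1/2 ≤ 8*((m:ℝ)+1)^2 := by nlinarith
  have hE1 := Ee_le (m := m) (by positivity) hcb
  have hE1' := Ee_nonneg_mul (m := m) (x := ((s.2 : ℕ):ℝ) + 1/2) (by positivity)
  have hcb2 : 2*(m:ℝ) * ((s.2 : ℕ):ℝ) ≤ 8*((m:ℝ)+1)^2 := by nlinarith
  have hE2 := Ee_le (m := m) (x := 2*(m:ℝ) * ((s.2 : ℕ):ℝ)) (by positivity) hcb2
  have hE2' := Ee_nonneg_mul (m := m) (x := 2*(m:ℝ) * ((s.2 : ℕ):ℝ)) (by positivity)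
  have hre : 2 * Ee m * (m:ℝ) * ((s.2:ℕ):ℝ) = Ee m * (2*(m:ℝ) * ((s.2 : ℕ):ℝ)) := by ring
  unfold soff
  split_ifs
  all_goals rw [abs_le]; constructor
  all_goals linarith [hE2, hE2']

lemma soff_last (s : Fin (K+2) × Fin m) : soff m K s (lastI' K) = 0 := by
  unfold soff
  split_ifs with hA hB hC hD
  · exfalso; have hv := congrArg Fin.val hB; rw [lastI_val] at hv; omega
  · rfl
  · exfalso; rw [lastI_val] at hC; omega
  · exfalso; rw [lastI_val] at hC; omega
  · rfl

lemma qoff_last (f : Fin (K+2) → Fin m) : qoff m K f (lastI' K) = level m K f := by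
  unfold qoff level
  rw [if_neg (by rw [lastI_val]; omega)]

lemma diff_anchor (f : Fin (K+2) → Fin m) (s : Fin (K+2) × Fin m) :
    |qoff m K f (lastI' K) - soff m K s (lastI' K)| = level m K f := by
  rw [soff_last, qoff_last, sub_zero, abs_of_pos]
  linarith [level_ge_one (m := m) (K := K) f]

end MainProofs2

section Membership

variable {m K : ℕ}

lemma qoff_content (f : Fin (K+2) → Fin m) {i : Fin (K+2)} (hi : i.val < K+1) :
    qoff m K f i = -1 + Ee m * (((f i : ℕ):ℝ) + (m:ℝ) * ((f (lastI' K) : ℕ) : ℝ)) := by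
  unfold qoff; rw [if_pos hi]

lemma soff_left {s : Fin (K+2) × Fin m} (hj : s.1.val < K+1) :
    soff m K s s.1 = -2 + Ee m * (((s.2 : ℕ):ℝ) + 1/2) := by
  unfold soff; rw [if_pos hj, if_pos rfl]

lemma soff_left_other {s : Fin (K+2) × Fin m} (hj : s.1.val < K+1) {i : Fin (K+2)}
    (hne : i ≠ s.1) : soff m K s i = 0 := by
  unfold soff; rw [if_pos hj, if_neg hne]

lemma soff_right0 {s : Fin (K+2) × Fin m} (hj : ¬ s.1.val < K+1) {i : Fin (K+2)}
    (hi : i.val = 0) (ht : (s.2 : ℕ) = 0) : soff m K s i = 50 := by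
  unfold soff; rw [if_neg hj, if_pos hi, if_pos ht]

lemma soff_right1 {s : Fin (K+2) × Fin m} (hj : ¬ s.1.val < K+1) {i : Fin (K+2)}
    (hi : i.val = 0) (ht : (s.2 : ℕ) ≠ 0) :
    soff m K s i = 2 * Ee m * (m:ℝ) * ((s.2:ℕ):ℝ) := by
  unfold soff; rw [if_neg hj, if_pos hi, if_neg ht]

lemma soff_right_other {s : Fin (K+2) × Fin m} (hj : ¬ s.1.val < K+1) {i : Fin (K+2)}
    (hi : ¬ i.val = 0) : soff m K s i = 0 := by
  unfold soff; rw [if_neg hj, if_neg hi]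

/-- all standard bound haves packaged -/
lemma std_bounds (hm : 0 < m) (f : Fin (K+2) → Fin m) (i : Fin (K+2)) (t : Fin m) :
    0 < Ee m ∧ (0:ℝ) ≤ (m:ℝ) ∧
    (0:ℝ) ≤ ((f i : ℕ):ℝ) ∧ ((f i : ℕ):ℝ) ≤ (m:ℝ) - 1 ∧
    (0:ℝ) ≤ ((f (lastI' K) : ℕ):ℝ) ∧ ((f (lastI' K) : ℕ):ℝ) ≤ (m:ℝ) - 1 ∧
    (0:ℝ) ≤ ((t : ℕ):ℝ) ∧ ((t : ℕ):ℝ) ≤ (m:ℝ) - 1 ∧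
    Ee m * (((f i : ℕ):ℝ) + (m:ℝ)*((f (lastI' K) : ℕ):ℝ)) ≤ 1/4 ∧
    0 ≤ Ee m * (((f i : ℕ):ℝ) + (m:ℝ)*((f (lastI' K) : ℕ):ℝ)) ∧
    Ee m * ((m:ℝ)*((f (lastI' K) : ℕ):ℝ)) ≤ 1/4 ∧
    0 ≤ Ee m * ((m:ℝ)*((f (lastI' K) : ℕ):ℝ)) ∧
    Ee m * (((t : ℕ):ℝ) + 1/2) ≤ 1/4 ∧
    0 ≤ Ee m * (((t : ℕ):ℝ) + 1/2) ∧
    Ee m * (2*(m:ℝ)*((t : ℕ):ℝ)) ≤ 1/4 ∧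
    0 ≤ Ee m * (2*(m:ℝ)*((t : ℕ):ℝ)) ∧
    Ee m * (m:ℝ) ≤ 1/4 := by
  have hE := Ee_pos m
  have hm0 : (0:ℝ) ≤ (m:ℝ) := Nat.cast_nonneg m
  have h1 := finval_le hm (f i); have h1' := finval_nonneg (f i)
  have h2 := finval_le hm (f (lastI' K)); have h2' := finval_nonneg (f (lastI' K))
  have h3 := finval_le hm t; have h3' := finval_nonneg t
  refine ⟨hE, hm0, h1', h1, h2', h2, h3', h3, ?_, ?_, ?_, ?_, ?_, ?_, ?_, ?_, ?_⟩
  · exact Ee_le (by positivity) (by nlinarith)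
  · exact Ee_nonneg_mul (by positivity)
  · exact Ee_le (by positivity) (by nlinarith)
  · exact Ee_nonneg_mul (by positivity)
  · exact Ee_le (by positivity) (by nlinarith)
  · exact Ee_nonneg_mul (by positivity)
  · exact Ee_le (by positivity) (by nlinarith)
  · exact Ee_nonneg_mul (by positivity)
  · exact Ee_le hm0 (by nlinarith)

lemma diff_le (hm : 0 < m) {f : Fin (K+2) → Fin m} {s : Fin (K+2) × Fin m}
    (hmem : Memb m K s f) (i : Fin (K+2)) :
    |qoff m K f i - soff m K s i| ≤ level m K f := by
  by_cases hlast : i.val < K + 1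
  case neg =>
    have hi : i = lastI' K := by
      have := i.isLt; apply Fin.ext; rw [lastI_val]; omega
    subst hi
    rw [diff_anchor]
  case pos =>
  obtain ⟨hE, hm0, hFi0, hFi, hF'0, hF', hT0, hT, e1, e1', e2, e2', e3, e3', e4, e4', e5⟩ :=
    std_bounds hm f i s.2
  by_cases hj : s.1.val < K+1
  · unfold Memb at hmem; rw [if_pos hj] at hmem
    by_cases hij : i = s.1
    · rw [hij, qoff_content f hj, soff_left hj]
      obtain ⟨_, _, hGi0, hGi, _, _, _, _, g1, g1', _, _, _, _, _, _, _⟩ :=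
        std_bounds hm f s.1 s.2
      have hc : ((f s.1 : ℕ):ℝ) ≤ ((s.2 : ℕ):ℝ) := by exact_mod_cast hmem
      have hmul : Ee m * ((f s.1 : ℕ):ℝ) ≤ Ee m * ((s.2 : ℕ):ℝ) :=
        mul_le_mul_of_nonneg_left hc (le_of_lt hE)
      unfold level
      rw [abs_le]; constructor <;> linarith
    · rw [qoff_content f hlast, soff_left_other hj hij, sub_zero]
      unfold level
      rw [abs_le]; constructor <;> nlinarith
  · unfold Memb at hmem; rw [if_neg hj] at hmem
    obtain ⟨ht0, htF⟩ := hmem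
    by_cases hi0 : i.val = 0
    · rw [qoff_content f hlast, soff_right1 hj hi0 (by omega)]
      have hc : ((s.2 : ℕ):ℝ) ≤ ((f (lastI' K) : ℕ):ℝ) := by exact_mod_cast htF
      have hmul : Ee m * ((m:ℝ) * ((s.2 : ℕ):ℝ)) ≤ Ee m * ((m:ℝ) * ((f (lastI' K) : ℕ):ℝ)) := by
        apply mul_le_mul_of_nonneg_left _ (le_of_lt hE)
        exact mul_le_mul_of_nonneg_left hc hm0
      unfold level
      rw [abs_le]; constructor <;> linarith [mul_nonneg (le_of_lt hE) hFi0, mul_nonneg (le_of_lt hE) hT0, mul_nonneg (le_of_lt hE) hF'0]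
    · rw [qoff_content f hlast, soff_right_other hj hi0, sub_zero]
      unfold level
      rw [abs_le]; constructor <;> linarith [mul_nonneg (le_of_lt hE) hFi0, mul_nonneg (le_of_lt hE) hT0, mul_nonneg (le_of_lt hE) hF'0]

lemma diff_gt (hm : 0 < m) {f : Fin (K+2) → Fin m} {s : Fin (K+2) × Fin m}
    (hnm : ¬ Memb m K s f) :
    ∃ i, level m K f + Ee m / 2 ≤ |qoff m K f i - soff m K s i| := by
  by_cases hj : s.1.val < K+1
  · refine ⟨s.1, ?_⟩
    obtain ⟨hE, hm0, hFi0, hFi, hF'0, hF', hT0, hT, e1, e1', e2, e2', e3, e3', e4, e4', e5⟩ :=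
      std_bounds hm f s.1 s.2
    unfold Memb at hnm; rw [if_pos hj] at hnm
    have hnat : (s.2 : ℕ) + 1 ≤ (f s.1 : ℕ) := by omega
    have hc : ((s.2 : ℕ):ℝ) + 1 ≤ ((f s.1 : ℕ):ℝ) := by exact_mod_cast hnat
    have hmul : Ee m * (((s.2 : ℕ):ℝ) + 1) ≤ Ee m * ((f s.1 : ℕ):ℝ) :=
      mul_le_mul_of_nonneg_left hc (le_of_lt hE)
    rw [qoff_content f hj, soff_left hj]
    refine le_trans ?_ (le_abs_self _)
    unfold level
    linarith [mul_nonneg (le_of_lt hE) hFi0, mul_nonneg (le_of_lt hE) hT0, mul_nonneg (le_of_lt hE) hF'0]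
  · refine ⟨zeroI K, ?_⟩
    obtain ⟨hE, hm0, hFi0, hFi, hF'0, hF', hT0, hT, e1, e1', e2, e2', e3, e3', e4, e4', e5⟩ :=
      std_bounds hm f (zeroI K) s.2
    unfold Memb at hnm; rw [if_neg hj] at hnm
    have h0K : (zeroI K).val < K + 1 := by simp [zeroI]
    have hz : (zeroI K).val = 0 := rfl
    have hm1 : (1:ℝ) ≤ (m:ℝ) := by exact_mod_cast hm
    have hEle : Ee m * 1 ≤ Ee m * (m:ℝ) := mul_le_mul_of_nonneg_left hm1 (le_of_lt hE)
    refine le_trans ?_ (neg_le_abs _)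
    by_cases ht : (s.2 : ℕ) = 0
    · rw [qoff_content f h0K, soff_right0 hj hz ht]
      unfold level; linarith [mul_nonneg (le_of_lt hE) hFi0, mul_nonneg (le_of_lt hE) hT0, mul_nonneg (le_of_lt hE) hF'0]
    · have hnat : (f (lastI' K) : ℕ) + 1 ≤ (s.2 : ℕ) := by
        by_contra hco
        push_neg at hco
        exact hnm ⟨Nat.pos_of_ne_zero ht, by omega⟩
      have hc : ((f (lastI' K) : ℕ):ℝ) + 1 ≤ ((s.2:ℕ):ℝ) := by exact_mod_cast hnat
      have hmul : Ee m * ((m:ℝ) * (((f (lastI' K) : ℕ):ℝ) + 1))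
          ≤ Ee m * ((m:ℝ) * ((s.2:ℕ):ℝ)) :=
        mul_le_mul_of_nonneg_left (mul_le_mul_of_nonneg_left hc hm0) (le_of_lt hE)
      have hEF0 : Ee m * ((f (zeroI K) : ℕ):ℝ) ≤ Ee m * ((m:ℝ) - 1) :=
        mul_le_mul_of_nonneg_left hFi (le_of_lt hE)
      rw [qoff_content f h0K, soff_right1 hj hz ht]
      unfold level; linarith [mul_nonneg (le_of_lt hE) hFi0, mul_nonneg (le_of_lt hE) hT0, mul_nonneg (le_of_lt hE) hF'0]

end Membership

section NNlevel

local instance : DecidableEq (List (Pt 1)) := Classical.decEq _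

variable {m K : ℕ}

lemma Memb_left_iff {j : Fin (K+2)} (hj : j.val < K+1) (t : Fin m) (f : Fin (K+2) → Fin m) :
    Memb m K (j, t) f ↔ (f j : ℕ) ≤ (t : ℕ) := by
  unfold Memb; rw [if_pos hj]

lemma Memb_right_iff {j : Fin (K+2)} (hj : ¬ j.val < K+1) (t : Fin m) (f : Fin (K+2) → Fin m) :
    Memb m K (j, t) f ↔ (0 < (t : ℕ) ∧ (t : ℕ) ≤ (f (lastI' K) : ℕ)) := by
  unfold Memb; rw [if_neg hj]

def siteC (m K : ℕ) (s : Fin (K+2) × Fin m) : List (Pt 1) := curveOf (soff m K s)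

def queryC (m K : ℕ) (f : Fin (K+2) → Fin m) : List (Pt 1) := curveOf (qoff m K f)

lemma level_le120 (hm : 0 < m) (f : Fin (K+2) → Fin m) : level m K f ≤ 120 :=
  le_trans (level_le hm f) (by norm_num)

lemma dDF_ge_level (hm : 0 < m) (f : Fin (K+2) → Fin m) (s : Fin (K+2) × Fin m) :
    level m K f ≤ dDF (queryC m K f) (siteC m K s) := by
  apply dDF_ge (by omega) (qoff_band hm f) (soff_band hm s) (level_le120 hm f) (lastI' K)
  rw [diff_anchor]

lemma dDF_mem (hm : 0 < m) {f : Fin (K+2) → Fin m} {s : Fin (K+2) × Fin m}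
    (hmem : Memb m K s f) :
    dDF (queryC m K f) (siteC m K s) = level m K f := by
  refine le_antisymm ?_ (dDF_ge_level hm f s)
  apply dDF_le (by omega) (le_trans zero_le_one (level_ge_one f))
  exact diff_le hm hmem

lemma dDF_nonmem (hm : 0 < m) {f : Fin (K+2) → Fin m} {s : Fin (K+2) × Fin m}
    (hnm : ¬ Memb m K s f) :
    level m K f + Ee m / 2 < 120 ∧
    level m K f + Ee m / 2 ≤ dDF (queryC m K f) (siteC m K s) := by
  have hE := Ee_pos m
  have hE1 : Ee m ≤ 1 := by
    have h32 : (1:ℝ) ≤ 32 * ((m:ℝ)+1)^2 := by nlinarith [Nat.cast_nonneg (α := ℝ) m]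
    rw [Ee]
    calc (32 * ((m:ℝ)+1)^2)⁻¹ ≤ 1⁻¹ := by
          apply inv_anti₀ (by norm_num) h32
      _ = 1 := by norm_num
  have hlt : level m K f + Ee m / 2 < 120 := by
    have := level_le hm f; linarith
  refine ⟨hlt, ?_⟩
  obtain ⟨i, hi⟩ := diff_gt hm hnm
  exact dDF_ge (by omega) (qoff_band hm f) (soff_band hm s) (le_of_lt hlt) i hi

/-- the full set of sites -/
def Scon (m K : ℕ) : Finset (List (Pt 1)) := Finset.image (siteC m K) Finset.univ

lemma soff_inj (hm : 0 < m) : Function.Injective (soff m K) := by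
  intro s s' h
  have hE := Ee_pos m
  have key : ∀ t : Fin m, Ee m * (((t:ℕ):ℝ) + 1/2) ≤ 1/4 ∧ 0 ≤ Ee m * (((t:ℕ):ℝ) + 1/2) ∧
      2 * Ee m * (m:ℝ) * ((t:ℕ):ℝ) ≤ 1/4 ∧ 0 ≤ 2 * Ee m * (m:ℝ) * ((t:ℕ):ℝ) := by
    intro t
    have h3 := finval_le hm t; have h3' := finval_nonneg t
    have hm0 : (0:ℝ) ≤ (m:ℝ) := Nat.cast_nonneg m
    have b1 := Ee_le (m := m) (x := ((t:ℕ):ℝ) + 1/2) (by positivity) (by nlinarith)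
    have b2 := Ee_le (m := m) (x := 2*(m:ℝ)*((t:ℕ):ℝ)) (by positivity) (by nlinarith)
    have b2' := Ee_nonneg_mul (m := m) (x := 2*(m:ℝ)*((t:ℕ):ℝ)) (by positivity)
    refine ⟨b1, Ee_nonneg_mul (by positivity), by linarith, by linarith⟩
  by_cases hj : s.1.val < K+1 <;> by_cases hj' : s'.1.val < K+1
  · -- both left
    have h1 := congrFun h s.1
    rw [soff_left hj] at h1
    by_cases hss : s.1 = s'.1
    · rw [hss, soff_left hj'] at h1
      have : ((s.2:ℕ):ℝ) = ((s'.2:ℕ):ℝ) := by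
        have := mul_left_cancel₀ (ne_of_gt hE) (by linarith : Ee m * (((s.2:ℕ):ℝ) + 1/2) = Ee m * (((s'.2:ℕ):ℝ) + 1/2))
        linarith
      have : (s.2:ℕ) = (s'.2:ℕ) := by exact_mod_cast this
      exact Prod.ext hss (Fin.ext this)
    · rw [soff_left_other hj' (fun hc => hss hc)] at h1
      exfalso
      obtain ⟨c1, c1', _, _⟩ := key s.2
      linarith
  · -- left vs right : contradiction via coordinate s.1
    exfalso
    have h1 := congrFun h s.1
    rw [soff_left hj] at h1
    obtain ⟨c1, c1', _, _⟩ := key s.2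
    by_cases h0 : s.1.val = 0
    · by_cases ht' : (s'.2 : ℕ) = 0
      · rw [soff_right0 hj' h0 ht'] at h1; linarith
      · rw [soff_right1 hj' h0 ht'] at h1
        obtain ⟨_, _, c2, c2'⟩ := key s'.2
        linarith
    · rw [soff_right_other hj' h0] at h1; linarith
  · -- right vs left : symmetric
    exfalso
    have h1 := congrFun h s'.1
    rw [soff_left hj'] at h1
    obtain ⟨c1, c1', _, _⟩ := key s'.2
    by_cases h0 : s'.1.val = 0
    · by_cases ht : (s.2 : ℕ) = 0
      · rw [soff_right0 hj h0 ht] at h1; linarith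
      · rw [soff_right1 hj h0 ht] at h1
        obtain ⟨_, _, c2, c2'⟩ := key s.2
        linarith
    · rw [soff_right_other hj h0] at h1; linarith
  · -- both right
    have hfst : s.1 = s'.1 := by
      apply Fin.ext
      have := s.1.isLt; have := s'.1.isLt
      omega
    have h1 := congrFun h (zeroI K)
    have hz : (zeroI K).val = 0 := rfl
    by_cases ht : (s.2 : ℕ) = 0 <;> by_cases ht' : (s'.2 : ℕ) = 0
    · exact Prod.ext hfst (Fin.ext (by rw [ht, ht']))
    · exfalso
      rw [soff_right0 hj hz ht, soff_right1 hj' hz ht'] at h1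
      obtain ⟨_, _, c2, c2'⟩ := key s'.2
      linarith
    · exfalso
      rw [soff_right1 hj hz ht, soff_right0 hj' hz ht'] at h1
      obtain ⟨_, _, c2, c2'⟩ := key s.2
      linarith
    · rw [soff_right1 hj hz ht, soff_right1 hj' hz ht'] at h1
      have hmr : (0:ℝ) < (m:ℝ) := by exact_mod_cast hm
      have : ((s.2:ℕ):ℝ) = ((s'.2:ℕ):ℝ) := by
        have h1' : (2 * Ee m * (m:ℝ)) * ((s.2:ℕ):ℝ)
            = (2 * Ee m * (m:ℝ)) * ((s'.2:ℕ):ℝ) := by linarith [h1]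
        exact mul_left_cancel₀ (by positivity) h1'
      have : (s.2:ℕ) = (s'.2:ℕ) := by exact_mod_cast this
      exact Prod.ext hfst (Fin.ext this)

lemma siteC_inj (hm : 0 < m) : Function.Injective (siteC m K) :=
  fun s s' h => soff_inj hm (curveOf_inj h)

lemma Scon_card (hm : 0 < m) : (Scon m K).card = (K+2) * m := by
  rw [Scon, Finset.card_image_of_injective _ (siteC_inj hm), Finset.card_univ]
  simp [Fintype.card_prod]

lemma mem_NN_iff (hm : 0 < m) (f : Fin (K+2) → Fin m) (P : List (Pt 1)) :
    P ∈ NN (Scon m K) (queryC m K f) ↔ ∃ s, Memb m K s f ∧ siteC m K s = P := by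
  have hwit : Memb m K (⟨zeroI K, ⟨m-1, by omega⟩⟩ : Fin (K+2) × Fin m) f := by
    rw [Memb_left_iff (by simp [zeroI] : (zeroI K).val < K+1)]
    have := (f (zeroI K)).isLt
    simp only
    omega
  constructor
  · rintro ⟨hPS, hmin⟩
    rw [Scon, Finset.mem_image] at hPS
    obtain ⟨s, _, rfl⟩ := hPS
    refine ⟨s, ?_, rfl⟩
    by_contra hnm
    have h1 := (dDF_nonmem hm hnm).2
    have h2 := hmin _ (by
      rw [Scon, Finset.mem_image]
      exact ⟨_, Finset.mem_univ _, rfl⟩ :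
      siteC m K (⟨zeroI K, ⟨m-1, by omega⟩⟩ : Fin (K+2) × Fin m) ∈ Scon m K)
    rw [dDF_mem hm hwit] at h2
    have hE := Ee_pos m
    linarith
  · rintro ⟨s, hmem, rfl⟩
    refine ⟨by rw [Scon, Finset.mem_image]; exact ⟨_, Finset.mem_univ _, rfl⟩, ?_⟩
    intro P' hP'
    rw [Scon, Finset.mem_image] at hP'
    obtain ⟨s', _, rfl⟩ := hP'
    rw [dDF_mem hm hmem]
    exact dDF_ge_level hm f s'

lemma NN_inj (hm : 0 < m) {f g : Fin (K+2) → Fin m}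
    (h : NN (Scon m K) (queryC m K f) = NN (Scon m K) (queryC m K g)) : f = g := by
  have hiff : ∀ s, Memb m K s f ↔ Memb m K s g := by
    intro s
    constructor <;> intro hmem
    · have : siteC m K s ∈ NN (Scon m K) (queryC m K g) := by
        rw [← h, mem_NN_iff hm]; exact ⟨s, hmem, rfl⟩
      rw [mem_NN_iff hm] at this
      obtain ⟨s', hm', he⟩ := this
      rwa [← siteC_inj hm he]
    · have : siteC m K s ∈ NN (Scon m K) (queryC m K f) := by
        rw [h, mem_NN_iff hm]; exact ⟨s, hmem, rfl⟩
      rw [mem_NN_iff hm] at this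
      obtain ⟨s', hm', he⟩ := this
      rwa [← siteC_inj hm he]
  funext i
  by_cases hi : i.val < K+1
  · -- content coordinate
    have h1 := (hiff ⟨i, f i⟩).1
    have h2 := (hiff ⟨i, g i⟩).2
    rw [Memb_left_iff hi, Memb_left_iff hi] at h1 h2
    exact Fin.ext (le_antisymm (h2 le_rfl) (h1 le_rfl))
  · -- anchor coordinate
    have hi' : i = lastI' K := by
      have := i.isLt; apply Fin.ext; rw [lastI_val]; omega
    subst hi'
    by_contra hne
    have hne' : (f (lastI' K) : ℕ) ≠ (g (lastI' K) : ℕ) := fun hc => hne (Fin.ext hc)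
    have hL : ¬ (lastI' K).val < K + 1 := by rw [lastI_val]; omega
    rcases Nat.lt_or_ge (f (lastI' K) : ℕ) (g (lastI' K) : ℕ) with hlt | hge
    · have hh := (hiff ⟨lastI' K, g (lastI' K)⟩).2
      rw [Memb_right_iff hL, Memb_right_iff hL] at hh
      obtain ⟨p1, p2⟩ := hh ⟨by omega, le_rfl⟩
      omega
    · have hlt : (g (lastI' K) : ℕ) < (f (lastI' K) : ℕ) := by omega
      have hh := (hiff ⟨lastI' K, f (lastI' K)⟩).1
      rw [Memb_right_iff hL, Memb_right_iff hL] at hh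
      obtain ⟨p1, p2⟩ := hh ⟨by omega, le_rfl⟩
      omega

end NNlevel

-- ===== k = 1 machinery =====

section KOne

local instance : DecidableEq (List (Pt 1)) := Classical.decEq _

def site1 (n : ℕ) (t : Fin n) : List (Pt 1) := [e1 (10*(t:ℕ))]

lemma site1_inj {n : ℕ} : Function.Injective (site1 n) := by
  intro t t' h
  simp only [site1, List.cons.injEq] at h
  have := e1_inj h.1
  have : ((t:ℕ):ℝ) = ((t':ℕ):ℝ) := by linarith
  exact Fin.ext (by exact_mod_cast this)

lemma NN_site1 {n : ℕ} (v : Fin n) :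
    NN (Finset.image (site1 n) Finset.univ) (site1 n v) = {site1 n v} := by
  ext P
  simp only [NN, Set.mem_setOf_eq, Set.mem_singleton_iff]
  constructor
  · rintro ⟨hPS, hmin⟩
    rw [Finset.mem_image] at hPS
    obtain ⟨t, _, rfl⟩ := hPS
    have h2 := hmin (site1 n v) (by rw [Finset.mem_image]; exact ⟨v, Finset.mem_univ _, rfl⟩)
    simp only [site1] at h2 ⊢
    rw [dDF_single, dDF_single, dist_self] at h2
    have : dist (e1 (10*((v:ℕ):ℝ))) (e1 (10*((t:ℕ):ℝ))) = 0 :=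
      le_antisymm h2 dist_nonneg
    rw [dist_eq_zero] at this
    rw [this]
  · rintro rfl
    refine ⟨by rw [Finset.mem_image]; exact ⟨v, Finset.mem_univ _, rfl⟩, ?_⟩
    intro P' _
    simp only [site1]
    rw [dDF_single, dist_self]
    exact dDF_nonneg_aux _ _
  where
  dDF_nonneg_aux (A B : List (Pt 1)) : 0 ≤ dDF A B := by
    apply Real.sInf_nonneg
    rintro b ⟨c, _, rfl⟩
    exact couplingCost_nonneg _ _ _

end KOne

-- ===== final theorem =====

local instance : DecidableEq (List (Pt 1)) := Classical.decEq _


/-- for `k ∣ n` there are `n` curves in `ℝ¹` with `k` vertices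
each, together with `(n/k)^k` query curves having pairwise distinct
nearest-neighbor sets; hence the Voronoi diagram under the discrete Fréchet
distance has at least `(n/k)^k` regions. -/
theorem voronoi_lower_bound_dim_one (n k : ℕ) (hk : 0 < k) (hdvd : k ∣ n) :
    ∃ S : Finset (List (Pt 1)), S.card = n ∧ (∀ P ∈ S, P.length = k) ∧
      ∃ Q : Fin ((n / k) ^ k) → List (Pt 1),
        (∀ i, (Q i).length = k) ∧
        Function.Injective (fun i => NN S (Q i)) := by
  rcases Nat.eq_zero_or_pos n with rfl | hn
  · have h0 : (0/k)^k = 0 := by rw [Nat.zero_div]; exact Nat.zero_pow (by omega)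
    exact ⟨∅, by simp, by simp, fun i => (Fin.cast h0 i).elim0,
      fun i => (Fin.cast h0 i).elim0, fun i => (Fin.cast h0 i).elim0⟩
  rcases Nat.lt_or_ge k 2 with hk1 | hk2
  · -- k = 1
    have hk1' : k = 1 := by omega
    subst hk1'
    have hcast : (n/1)^1 = n := by rw [Nat.div_one, pow_one]
    refine ⟨Finset.image (site1 n) Finset.univ, ?_, ?_, fun i => site1 n (Fin.cast hcast i),
      fun i => rfl, ?_⟩
    · rw [Finset.card_image_of_injective _ site1_inj, Finset.card_univ, Fintype.card_fin]
    · intro P hP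
      rw [Finset.mem_image] at hP
      obtain ⟨t, _, rfl⟩ := hP
      rfl
    · intro i j h
      simp only at h
      rw [NN_site1, NN_site1] at h
      have := Set.singleton_eq_singleton_iff.1 h
      have := site1_inj this
      exact Fin.cast_injective _ this
  · -- k ≥ 2
    obtain ⟨K, rfl⟩ : ∃ K, k = K + 2 := ⟨k - 2, by omega⟩
    have hmpos : 0 < n / (K+2) := Nat.div_pos (Nat.le_of_dvd hn hdvd) hk
    refine ⟨Scon (n/(K+2)) K, ?_, ?_,
      fun i => queryC (n/(K+2)) K (finFunctionFinEquiv.symm i), fun i => ?_, ?_⟩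
    · rw [Scon_card hmpos, mul_comm]
      exact Nat.div_mul_cancel hdvd
    · intro P hP
      rw [Scon, Finset.mem_image] at hP
      obtain ⟨s, _, rfl⟩ := hP
      exact curveOf_length _
    · exact curveOf_length _
    · intro i j h
      simp only at h
      have := NN_inj hmpos h
      have := congrArg finFunctionFinEquiv.symm.symm (funext (congrFun this))
      simpa using finFunctionFinEquiv.symm.injective (by exact funext (congrFun (NN_inj hmpos h)))
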